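/- Let Λ be a lattice with integer-valued symmetric bilinear form (·|·), and let Δ ⊆ Λ satisfy Δ = -Δ, span Λ over ℤ, and be closed under partial summation (α, β ∈ Δ, (α|β) < 0 implies α + β ∈ Δ). If the form is semi-positive definite but not positive definite, then there exists δ ∈ Δ with (δ|δ) = 0. -/

import Mathlib

private lemma key_multiset {Λ : Type*} [AddCommGroup Λ] [Module ℤ Λ]
    (B : Λ →ₗ[ℤ] Λ →ₗ[ℤ] ℤ) (hsymm : ∀ x y, B x y = B y x)
    (Δ : Set Λ)
    (hsum : ∀ a ∈ Δ, ∀ b ∈ Δ, B a b < 0 → a + b ∈ Δ)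
    (hspos : ∀ lam : Λ, 0 ≤ B lam lam) :
    ∀ n (m : Multiset Λ), Multiset.card m = n → m ≠ 0 →
      (∀ a ∈ m, a ∈ Δ) → B m.sum m.sum = 0 → ∃ δ ∈ Δ, B δ δ = 0 := by
  intro n
  induction n using Nat.strong_induction_on with
  | _ n ih =>
    intro m hcard hne hmem hiso
    obtain ⟨α, hαm⟩ := Multiset.exists_mem_of_ne_zero hne
    obtain ⟨t, rfl⟩ := Multiset.exists_cons_of_mem hαm
    have hαΔ : α ∈ Δ := hmem α (Multiset.mem_cons_self _ _)
    by_cases hα0 : B α α = 0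
    · exact ⟨α, hαΔ, hα0⟩
    · have hαpos : 0 < B α α := lt_of_le_of_ne (hspos α) (Ne.symm hα0)
      have hsum_eq : (α ::ₘ t).sum = α + t.sum := Multiset.sum_cons α t
      have hexp : B α α + 2 * B α t.sum + B t.sum t.sum = 0 := by
        have := hiso
        rw [hsum_eq] at this
        simp only [map_add, LinearMap.add_apply] at this
        rw [hsymm t.sum α] at this
        linarith
      have hαs : B α t.sum < 0 := by
        have := hspos t.sum
        linarith
      -- find b ∈ t with B α b < 0
      have hmap : B α t.sum = (t.map (B α)).sum := map_multiset_sum (B α) t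
      have hexists : ∃ b ∈ t, B α b < 0 := by
        by_contra h
        push_neg at h
        have : (0 : ℤ) ≤ (t.map (B α)).sum := by
          apply Multiset.sum_nonneg
          intro x hx
          obtain ⟨b, hb, rfl⟩ := Multiset.mem_map.mp hx
          exact h b hb
        rw [← hmap] at this
        linarith
      obtain ⟨b, hbt, hαb⟩ := hexists
      have hbΔ : b ∈ Δ := hmem b (Multiset.mem_cons_of_mem hbt)
      have habΔ : α + b ∈ Δ := hsum α hαΔ b hbΔ hαb
      obtain ⟨t', ht'⟩ := Multiset.exists_cons_of_mem hbt
      set m' : Multiset Λ := (α + b) ::ₘ t' with hm'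
      have hsum' : m'.sum = (α ::ₘ t).sum := by
        rw [hm', ht']
        simp [Multiset.sum_cons]
        abel
      have hcard' : Multiset.card m' = n - 1 := by
        have h1 : Multiset.card t = n - 1 := by
          rw [← hcard]; simp
        have h2 : Multiset.card t = Multiset.card t' + 1 := by
          rw [ht']; simp
        rw [hm']
        simp only [Multiset.card_cons]
        omega
      have hn1 : n - 1 < n := by
        have : 1 ≤ n := by rw [← hcard]; simp only [Multiset.card_cons]; omega
        omega
      refine ih (n - 1) hn1 m' hcard' (Multiset.cons_ne_zero) ?_ ?_
      · intro a ha
        rw [hm', Multiset.mem_cons] at ha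
        rcases ha with rfl | ha
        · exact habΔ
        · exact hmem a (Multiset.mem_cons_of_mem (ht' ▸ Multiset.mem_cons_of_mem ha))
      · rw [hsum']; exact hiso

/-- If the symmetric bilinear form on the lattice is semi-positive definite but not
positive definite, and Δ = -Δ spans Λ and is closed under partial summation, then
Δ contains an isotropic vector. -/
theorem stmt_1 (Λ : Type*) [AddCommGroup Λ] [Module ℤ Λ]
    [Module.Free ℤ Λ] [Module.Finite ℤ Λ]
    (B : Λ →ₗ[ℤ] Λ →ₗ[ℤ] ℤ) (hsymm : ∀ x y, B x y = B y x)
    (Δ : Set Λ) (hneg : ∀ a ∈ Δ, -a ∈ Δ)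
    (hspan : Submodule.span ℤ Δ = ⊤)
    (hsum : ∀ a ∈ Δ, ∀ b ∈ Δ, B a b < 0 → a + b ∈ Δ)
    (hspos : ∀ lam : Λ, 0 ≤ B lam lam)
    (hnpd : ∃ lam : Λ, lam ≠ 0 ∧ B lam lam = 0) :
    ∃ δ ∈ Δ, B δ δ = 0 := by
  obtain ⟨lam, hlam0, hlamB⟩ := hnpd
  -- every element of Λ is a sum of a multiset of elements of Δ
  have hS : ∀ x : Λ, ∃ m : Multiset Λ, (∀ a ∈ m, a ∈ Δ) ∧ m.sum = x := by
    intro x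
    let P : Set Λ := {y | ∃ m : Multiset Λ, (∀ a ∈ m, a ∈ Δ) ∧ m.sum = y}
    have hzero : (0 : Λ) ∈ P := ⟨0, by simp, by simp⟩
    have hadd : ∀ y z, y ∈ P → z ∈ P → y + z ∈ P := by
      rintro y z ⟨m1, h1, rfl⟩ ⟨m2, h2, rfl⟩
      refine ⟨m1 + m2, ?_, by simp⟩
      intro a ha
      rcases Multiset.mem_add.mp ha with h | h
      · exact h1 a h
      · exact h2 a h
    have hnegP : ∀ y, y ∈ P → -y ∈ P := by
      rintro y ⟨m, h, rfl⟩
      refine ⟨m.map (fun a => -a), ?_, ?_⟩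
      · intro a ha
        obtain ⟨b, hb, rfl⟩ := Multiset.mem_map.mp ha
        exact hneg b (h b hb)
      · simp [Multiset.sum_map_neg']
    let S : Submodule ℤ Λ :=
      { carrier := P
        zero_mem' := hzero
        add_mem' := fun {y z} hy hz => hadd y z hy hz
        smul_mem' := by
          intro c x hx
          have hcast := Int.cast_smul_eq_zsmul (R := ℤ) (M := Λ) c x
          rw [Int.cast_id] at hcast
          rw [hcast]
          clear hcast
          induction c using Int.induction_on with
          | zero =>
            rw [zero_zsmul]
            exact hzero
          | succ n ihn =>
            rw [add_zsmul, one_zsmul]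
            exact hadd _ _ ihn hx
          | pred n ihn =>
            rw [sub_zsmul, one_zsmul]
            try rw [sub_eq_add_neg]
            exact hadd _ _ ihn (hnegP x hx) }
    have hle : Submodule.span ℤ Δ ≤ S := by
      rw [Submodule.span_le]
      intro a ha
      exact ⟨{a}, by simpa using ha, by simp⟩
    exact hle (hspan ▸ Submodule.mem_top)
  obtain ⟨m, hm, hsumeq⟩ := hS lam
  have hmne : m ≠ 0 := by
    rintro rfl
    exact hlam0 (by simpa using hsumeq.symm)
  exact key_multiset B hsymm Δ hsum hspos (Multiset.card m) m rfl hmne hm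
    (by rw [hsumeq]; exact hlamB)
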